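/- Let (Π, ρ) be a metric space and d ≥ 1 a real number, and suppose that for every ε ∈ (0,1), every finite subset of Π whose ε-balls cover Π has size at least ε^{−d}. Fix γ ≥ 1 and set ε_γ := 6^{−2}·γ^{−1/(d+1)}. Then for every Borel probability measure p on Π there exists a 1-Lipschitz function f : Π → [0,1] such that: (i) 0 ≤ sup_{π'} f(π') − f(π) ≤ ε_γ for every π ∈ Π; and (ii) ∫ [ sup_{π'} f(π') − f(π) − γ·D_H²(Ber(f(π)), Ber(1/2)) ] dp(π) ≥ 2^{−7}·γ^{−1/(d+1)}. -/

import Mathlib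

set_option maxHeartbeats 1000000


open MeasureTheory
open scoped ENNReal

/-- Squared Hellinger distance `D_H²(P,Q) = ∫ (√(dP/dν) − √(dQ/dν))² dν`
computed with the dominating measure `ν = P + Q`. -/
noncomputable def sqHellinger {α : Type*} [MeasurableSpace α] (P Q : Measure α) : ℝ :=
  ∫ x, (Real.sqrt ((P.rnDeriv (P + Q)) x).toReal
      - Real.sqrt ((Q.rnDeriv (P + Q)) x).toReal) ^ 2 ∂(P + Q)

/-- Bernoulli distribution on `{0,1} ⊆ ℝ` with mean `q`. -/
noncomputable def bern (q : ℝ) : Measure ℝ :=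
  ENNReal.ofReal q • Measure.dirac 1 + ENNReal.ofReal (1 - q) • Measure.dirac 0

lemma dirac_withDensity {α : Type*} [MeasurableSpace α] [MeasurableSingletonClass α]
    (x : α) (g : α → ℝ≥0∞) :
    (Measure.dirac x).withDensity g = g x • Measure.dirac x := by
  classical
  ext s hs
  rw [withDensity_apply _ hs, setLIntegral_dirac g s, Measure.smul_apply,
    Measure.dirac_apply' _ hs, smul_eq_mul, Set.indicator_apply]
  split_ifs <;> simp

lemma smul_dirac_withDensity {α : Type*} [MeasurableSpace α] [MeasurableSingletonClass α]
    (c : ℝ≥0∞) (x : α) (g : α → ℝ≥0∞) :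
    (c • Measure.dirac x).withDensity g = (c * g x) • Measure.dirac x := by
  rw [withDensity_smul_measure, _root_.dirac_withDensity, smul_smul]

instance bern_finite (q : ℝ) : IsFiniteMeasure (bern q) := by
  constructor
  simp only [bern, Measure.add_apply, Measure.smul_apply, smul_eq_mul,
    Measure.dirac_apply_of_mem (Set.mem_univ _), mul_one]
  exact ENNReal.add_lt_top.2 ⟨ENNReal.ofReal_lt_top, ENNReal.ofReal_lt_top⟩

lemma measurable_piecewise_one (a b : ℝ≥0∞) :
    Measurable (fun x : ℝ => if x = 1 then a else b) :=
  Measurable.ite (MeasurableSet.singleton 1) measurable_const measurable_const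

lemma bern_add_bern_half (q : ℝ) (hq0 : 0 ≤ q) (hq1 : q ≤ 1) :
    bern q + bern (1/2)
      = ENNReal.ofReal (q + 1/2) • Measure.dirac (1:ℝ)
        + ENNReal.ofReal (3/2 - q) • Measure.dirac (0:ℝ) := by
  rw [show (3/2 - q : ℝ) = (1 - q) + 1/2 by ring,
    ENNReal.ofReal_add hq0 (by norm_num), ENNReal.ofReal_add (by linarith) (by norm_num),
    add_smul, add_smul]
  simp only [bern]
  norm_num
  abel

lemma tau_withDensity (q a b : ℝ) (hq0 : 0 ≤ q) (hq1 : q ≤ 1)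
    (ha : 0 ≤ a) (hb : 0 ≤ b) :
    (bern q + bern (1/2)).withDensity
        (fun x : ℝ => if x = 1 then ENNReal.ofReal (a / (q + 1/2))
          else ENNReal.ofReal (b / (3/2 - q)))
      = ENNReal.ofReal a • Measure.dirac (1:ℝ) + ENNReal.ofReal b • Measure.dirac (0:ℝ) := by
  rw [bern_add_bern_half q hq0 hq1, withDensity_add_measure,
    smul_dirac_withDensity, smul_dirac_withDensity]
  norm_num
  rw [← ENNReal.ofReal_mul (by linarith), ← ENNReal.ofReal_mul (by linarith)]
  have hne1 : q + 1/2 ≠ 0 := by linarith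
  have hne0 : (3 - 2*q : ℝ) ≠ 0 := by linarith
  rw [show (q + 1/2) * (a / (q + 1/2)) = a by field_simp,
    show (3/2 - q) * (b / (3/2 - q)) = b by field_simp]

lemma bern_rnDeriv (q : ℝ) (hq0 : 0 ≤ q) (hq1 : q ≤ 1) :
    (bern q).rnDeriv (bern q + bern (1/2))
      =ᵐ[bern q + bern (1/2)]
      (fun x : ℝ => if x = 1 then ENNReal.ofReal (q / (q + 1/2))
          else ENNReal.ofReal ((1 - q) / (3/2 - q))) := by
  refine (Measure.eq_rnDeriv (measurable_piecewise_one _ _)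
    Measure.MutuallySingular.zero_left ?_).symm
  rw [zero_add, tau_withDensity q q (1-q) hq0 hq1 hq0 (by linarith)]
  rfl

lemma bern_half_rnDeriv (q : ℝ) (hq0 : 0 ≤ q) (hq1 : q ≤ 1) :
    (bern (1/2)).rnDeriv (bern q + bern (1/2))
      =ᵐ[bern q + bern (1/2)]
      (fun x : ℝ => if x = 1 then ENNReal.ofReal ((1/2) / (q + 1/2))
          else ENNReal.ofReal ((1/2) / (3/2 - q))) := by
  refine (Measure.eq_rnDeriv (measurable_piecewise_one _ _)
    Measure.MutuallySingular.zero_left ?_).symm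
  rw [zero_add, tau_withDensity q (1/2) (1/2) hq0 hq1 (by norm_num) (by norm_num)]
  rw [bern]
  norm_num

lemma integrable_ite_one {μ : Measure ℝ} [IsFiniteMeasure μ] (A B : ℝ) :
    Integrable (fun x : ℝ => if x = 1 then A else B) μ := by
  refine (integrable_const (|A| + |B|)).mono' ?_ (ae_of_all _ fun x => ?_)
  · exact (Measurable.ite (MeasurableSet.singleton 1) measurable_const
      measurable_const).aestronglyMeasurable
  · simp only [Real.norm_eq_abs]
    split_ifs
    · nlinarith [abs_nonneg B]
    · nlinarith [abs_nonneg A]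

lemma integral_dirac_sum (A B : ℝ) (c0 c1 : ℝ) (h0 : 0 ≤ c0) (h1 : 0 ≤ c1) :
    ∫ x, (if x = 1 then A else B)
        ∂(ENNReal.ofReal c1 • Measure.dirac (1:ℝ) + ENNReal.ofReal c0 • Measure.dirac (0:ℝ))
      = c1 * A + c0 * B := by
  rw [integral_add_measure, integral_smul_measure, integral_smul_measure,
    integral_dirac, integral_dirac]
  · norm_num [ENNReal.toReal_ofReal h0, ENNReal.toReal_ofReal h1]
    try ring
  · rcases eq_or_lt_of_le h1 with h | h
    · simp [← h]
    · exact (integrable_smul_measure (by simp [ENNReal.ofReal_eq_zero]; linarith)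
        ENNReal.ofReal_ne_top).2 (integrable_ite_one A B)
  · rcases eq_or_lt_of_le h0 with h | h
    · simp [← h]
    · exact (integrable_smul_measure (by simp [ENNReal.ofReal_eq_zero]; linarith)
        ENNReal.ofReal_ne_top).2 (integrable_ite_one A B)

lemma sqHellinger_bern (q : ℝ) (hq0 : 0 ≤ q) (hq1 : q ≤ 1) :
    sqHellinger (bern q) (bern (1/2))
      = (Real.sqrt q - Real.sqrt (1/2))^2 + (Real.sqrt (1-q) - Real.sqrt (1/2))^2 := by
  have h2 : (0:ℝ) < q + 1/2 := by linarith
  have h3 : (0:ℝ) < 3/2 - q := by linarith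
  set A : ℝ := (Real.sqrt (q / (q + 1/2)) - Real.sqrt ((1/2) / (q + 1/2)))^2 with hA
  set B : ℝ := (Real.sqrt ((1-q) / (3/2 - q)) - Real.sqrt ((1/2) / (3/2 - q)))^2 with hB
  have key : sqHellinger (bern q) (bern (1/2))
      = ∫ x, (if x = 1 then A else B) ∂(bern q + bern (1/2)) := by
    refine integral_congr_ae ?_
    filter_upwards [bern_rnDeriv q hq0 hq1, bern_half_rnDeriv q hq0 hq1] with x hx1 hx2
    rw [hx1, hx2]
    split_ifs
    · rw [ENNReal.toReal_ofReal (div_nonneg (by linarith) (by linarith)),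
        ENNReal.toReal_ofReal (div_nonneg (by linarith) (by linarith))]
    · rw [ENNReal.toReal_ofReal (div_nonneg (by linarith) (by linarith)),
        ENNReal.toReal_ofReal (div_nonneg (by linarith) (by linarith))]
  rw [key, bern_add_bern_half q hq0 hq1, integral_dirac_sum A B _ _ h3.le h2.le]
  have hc : ∀ a b c : ℝ, 0 ≤ a → 0 ≤ b → 0 < c →
      c * (Real.sqrt (a/c) - Real.sqrt (b/c))^2 = (Real.sqrt a - Real.sqrt b)^2 := by
    intro a b c ha hb hc
    rw [Real.sqrt_div ha, Real.sqrt_div hb, div_sub_div_same, div_pow,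
      Real.sq_sqrt hc.le, mul_div_cancel₀ _ hc.ne']
  rw [hA, hB, hc q (1/2) _ hq0 (by norm_num) h2, hc (1-q) (1/2) _ (by linarith) (by norm_num) h3]

lemma sqHellinger_bern_le (t : ℝ) (ht0 : 0 ≤ t) (ht1 : t ≤ 1/36) :
    sqHellinger (bern (1/2 + t)) (bern (1/2)) ≤ 4 * t^2 := by
  rw [sqHellinger_bern (1/2 + t) (by linarith) (by linarith)]
  have h1 : (1:ℝ) - (1/2 + t) = 1/2 - t := by ring
  rw [h1]
  set s1 := Real.sqrt (1/2 + t) with hs1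
  set s2 := Real.sqrt (1/2 - t) with hs2
  set r := Real.sqrt (1/2) with hr
  have hs1sq : s1^2 = 1/2 + t := Real.sq_sqrt (by linarith)
  have hs2sq : s2^2 = 1/2 - t := Real.sq_sqrt (by linarith)
  have hrsq : r^2 = 1/2 := Real.sq_sqrt (by norm_num)
  have hs1n : 0 ≤ s1 := Real.sqrt_nonneg _
  have hs2n : 0 ≤ s2 := Real.sqrt_nonneg _
  have hrn : 0 ≤ r := Real.sqrt_nonneg _
  -- key : s1 * s2 ≥ 1/2 - 2t²
  have hprod : s1 * s2 = Real.sqrt ((1/2 + t) * (1/2 - t)) := (Real.sqrt_mul (by linarith) _).symm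
  have ht2 : t^2 ≤ 1/36 * t := by nlinarith
  have hkey : (1:ℝ)/2 - 2*t^2 ≤ s1 * s2 := by
    rw [hprod]
    refine (Real.le_sqrt ?_ ?_).2 ?_
    · nlinarith
    · nlinarith
    · nlinarith
  -- then r * (s1 + s2) ≥ 1 - 2t²
  have hexp : (r * (s1 + s2))^2 = 1/2 + s1 * s2 := by
    rw [mul_pow, hrsq, add_sq, hs1sq, hs2sq]
    ring
  have hsum : (1:ℝ) - 2*t^2 ≤ r * (s1 + s2) := by
    have hsq : (1 - 2*t^2)^2 ≤ (r * (s1 + s2))^2 := by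
      rw [hexp]; nlinarith
    have h2 : 0 ≤ r * (s1 + s2) := by positivity
    have han : 0 < 1 - 2*t^2 := by nlinarith
    nlinarith [hsq, h2, han]
  nlinarith [hsum, hs1sq, hs2sq, hrsq]

lemma exists_small_ball {X : Type*} [MetricSpace X] [MeasurableSpace X] [BorelSpace X]
    (d : ℝ) (hpack : ∀ ε : ℝ, ε ∈ Set.Ioo (0 : ℝ) 1 → ∀ s : Finset X,
      (∀ π : X, ∃ π' ∈ s, dist π π' ≤ ε) → ε ^ (-d) ≤ (s.card : ℝ))
    (p : Measure X) [IsProbabilityMeasure p]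
    (ε : ℝ) (hε0 : 0 < ε) (hε1 : 2 * ε < 1) :
    ∃ π₀ : X, (p (Metric.ball π₀ ε)).toReal ≤ (2 * ε) ^ (d : ℝ) := by
  classical
  by_contra hcon
  push_neg at hcon
  set δ : ℝ := (2 * ε) ^ (d : ℝ) with hδ
  have hδ0 : 0 < δ := Real.rpow_pos_of_pos (by linarith) d
  -- any (2ε)-separated finset has card * δ < 1
  have key : ∀ S : Finset X, ((S : Set X).Pairwise fun a b => 2 * ε < dist a b) →
      (S.card : ℝ) * δ < 1 := by
    intro S hS
    rcases S.eq_empty_or_nonempty with rfl | hne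
    · simpa using zero_lt_one
    have hdisj : (S : Set X).PairwiseDisjoint (fun s => Metric.ball s ε) := by
      intro a ha b hb hab
      exact Metric.ball_disjoint_ball (by linarith [hS ha hb hab])
    have hmeas : ∀ b ∈ S, MeasurableSet (Metric.ball b ε) :=
      fun b _ => Metric.isOpen_ball.measurableSet
    have hsum : (∑ s ∈ S, p (Metric.ball s ε)) ≤ 1 := by
      rw [← measure_biUnion_finset hdisj hmeas]
      exact (measure_mono (Set.subset_univ _)).trans_eq measure_univ
    have hsumR : (∑ s ∈ S, (p (Metric.ball s ε)).toReal) ≤ 1 := by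
      rw [← ENNReal.toReal_sum (fun a _ => measure_ne_top p _)]
      exact ENNReal.toReal_le_of_le_ofReal zero_le_one (by simpa using hsum)
    have hlt : (∑ _s ∈ S, δ) < ∑ s ∈ S, (p (Metric.ball s ε)).toReal :=
      Finset.sum_lt_sum_of_nonempty hne fun s _ => hcon s
    rw [Finset.sum_const, nsmul_eq_mul] at hlt
    linarith
  -- a maximal separated set
  set A : Set ℕ := {n | ∃ S : Finset X, ((S : Set X).Pairwise fun a b => 2 * ε < dist a b)
      ∧ S.card = n} with hA
  have hA0 : 0 ∈ A := ⟨∅, by simp⟩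
  have hAbdd : BddAbove A := by
    refine ⟨Nat.ceil (1/δ), fun n hn => ?_⟩
    obtain ⟨S, hS, rfl⟩ := hn
    have := key S hS
    have h1 : (S.card : ℝ) ≤ 1/δ := by
      rw [le_div_iff₀ hδ0]; linarith
    have h2 : (S.card : ℝ) ≤ (Nat.ceil (1/δ) : ℝ) := h1.trans (Nat.le_ceil _)
    exact_mod_cast h2
  have hmem := Nat.sSup_mem ⟨0, hA0⟩ hAbdd
  obtain ⟨S, hS, hcard⟩ := hmem
  -- S is a 2ε-cover
  have hcover : ∀ π : X, ∃ π' ∈ S, dist π π' ≤ 2 * ε := by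
    intro π
    by_contra hx
    push_neg at hx
    have hπS : π ∉ S := fun h => by
      have := hx π h; simp at this; linarith
    have hins : (((insert π S : Finset X) : Set X).Pairwise fun a b => 2 * ε < dist a b) := by
      rw [Finset.coe_insert]
      refine Set.pairwise_insert.2 ⟨hS, fun b hb _ => ⟨hx b hb, by simpa [dist_comm] using hx b hb⟩⟩
    have : S.card + 1 ∈ A := ⟨insert π S, hins, by rw [Finset.card_insert_of_notMem hπS]⟩
    have hle := le_csSup hAbdd this
    rw [hcard] at hle
    omega
  have hsize := hpack (2 * ε) ⟨by linarith, hε1⟩ S hcover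
  rw [Real.rpow_neg (by linarith)] at hsize
  have h1 : (1:ℝ) ≤ (S.card : ℝ) * δ := by
    calc (1:ℝ) = δ⁻¹ * δ := (inv_mul_cancel₀ hδ0.ne').symm
    _ ≤ (S.card : ℝ) * δ := by
        exact mul_le_mul_of_nonneg_right hsize hδ0.le
  linarith [key S hS]

lemma abs_bound_aux (e g H fp : ℝ) (hg : 1 ≤ g) (h1 : 0 ≤ H) (h2 : H ≤ 2)
    (h4 : fp ≤ 1) (h5 : 0 ≤ fp) (he0 : 0 < e) :
    |1/2 + e - fp - g*H| ≤ 1 + e + 2*g := by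
  have hm1 : 0 ≤ g*H := mul_nonneg (by linarith) h1
  have hm2 : g*H ≤ g*2 := mul_le_mul_of_nonneg_left h2 (by linarith)
  rw [abs_le]
  constructor <;> linarith


/-- lower bound on the localized Decision-Estimation Coefficient for
Lipschitz bandits in a metric space whose `ε`-covering numbers are at least
`ε^{−d}`.  Models have Bernoulli rewards `Ber(f(π))` with 1-Lipschitz mean `f`,
the reference model is `Ber(1/2)`, and `sup f − f(π)` is the regret of `π`. -/
theorem lipschitz_bandit_dec_lower_bound {X : Type*} [MetricSpace X] [MeasurableSpace X]
    [BorelSpace X] (d : ℝ) (hd : 1 ≤ d)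
    (hpack : ∀ ε : ℝ, ε ∈ Set.Ioo (0 : ℝ) 1 → ∀ s : Finset X,
      (∀ π : X, ∃ π' ∈ s, dist π π' ≤ ε) → ε ^ (-d) ≤ (s.card : ℝ))
    (γ : ℝ) (hγ : 1 ≤ γ) (εγ : ℝ) (hεγ : εγ = (6 : ℝ) ^ (-(2 : ℤ)) * γ ^ (-1 / (d + 1)))
    (p : Measure X) [IsProbabilityMeasure p] :
    ∃ f : X → ℝ, LipschitzWith 1 f ∧ (∀ π, f π ∈ Set.Icc (0 : ℝ) 1) ∧
      (∀ π, 0 ≤ (⨆ π', f π') - f π ∧ (⨆ π', f π') - f π ≤ εγ) ∧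
      (2 : ℝ) ^ (-(7 : ℤ)) * γ ^ (-1 / (d + 1)) ≤
        ∫ π, ((⨆ π', f π') - f π - γ * sqHellinger (bern (f π)) (bern (1 / 2))) ∂p := by
  have hγ0 : (0:ℝ) < γ := by linarith
  have hdp : (0:ℝ) < d + 1 := by linarith
  set u : ℝ := γ ^ (-1 / (d + 1)) with hu
  have hu0 : 0 < u := Real.rpow_pos_of_pos hγ0 _
  have hu1 : u ≤ 1 := Real.rpow_le_one_of_one_le_of_nonpos hγ
    (by rw [neg_div]; exact neg_nonpos.2 (by positivity))
  have hεu : εγ = u / 36 := by rw [hεγ]; norm_num; ring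
  have hε0 : 0 < εγ := by rw [hεu]; positivity
  have hε36 : εγ ≤ 1/36 := by rw [hεu]; linarith
  have h2ε : 2 * εγ < 1 := by linarith
  -- nonempty
  haveI : Nonempty X := by
    by_contra hne
    rw [not_nonempty_iff] at hne
    have h1 : p Set.univ = 1 := measure_univ
    rw [Set.univ_eq_empty_iff.mpr hne, measure_empty] at h1
    exact zero_ne_one h1
  -- small ball
  obtain ⟨π₀, hπ₀⟩ := exists_small_ball d hpack p εγ hε0 h2ε
  set δ : ℝ := (2 * εγ) ^ (d : ℝ) with hδ
  have hδ0 : 0 < δ := Real.rpow_pos_of_pos (by linarith) d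
  have hδ18 : δ ≤ 1/18 := by
    have h1 : (2*εγ) ^ (d:ℝ) ≤ (2*εγ) ^ (1:ℝ) :=
      Real.rpow_le_rpow_of_exponent_ge (by linarith) (by linarith) hd
    rw [Real.rpow_one] at h1
    calc δ ≤ 2*εγ := h1
    _ ≤ 1/18 := by linarith
  -- key product bound : γ * εγ * δ ≤ 1/648
  have hkey : γ * εγ * δ ≤ 1/648 := by
    have hud : u ^ (d:ℝ) = γ ^ ((-1/(d+1)) * d) := by
      rw [hu, ← Real.rpow_mul hγ0.le]
    have hδeq : δ = u ^ (d:ℝ) / 18 ^ (d:ℝ) := by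
      rw [hδ, hεu, show 2 * (u/36) = u / 18 by ring, Real.div_rpow hu0.le (by norm_num)]
    have h18 : (18:ℝ) ≤ 18 ^ (d:ℝ) := by
      calc (18:ℝ) = 18 ^ (1:ℝ) := (Real.rpow_one _).symm
      _ ≤ 18 ^ (d:ℝ) := Real.rpow_le_rpow_of_exponent_le (by norm_num) hd
    have hprod : γ * u * u ^ (d:ℝ) = 1 := by
      rw [hud, hu, mul_assoc, ← Real.rpow_add hγ0,
        show -1/(d+1) + -1/(d+1)*d = -1 by field_simp; ring,
        Real.rpow_neg_one, mul_inv_cancel₀ hγ0.ne']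
    have hud0 : 0 < u ^ (d:ℝ) := Real.rpow_pos_of_pos hu0 _
    have h18d0 : (0:ℝ) < 18 ^ (d:ℝ) := Real.rpow_pos_of_pos (by norm_num) _
    rw [hεu, hδeq]
    rw [show γ * (u/36) * (u ^ (d:ℝ) / 18 ^ (d:ℝ)) = (γ * u * u ^ (d:ℝ)) / (36 * 18 ^ (d:ℝ))
      by field_simp; try ring, hprod]
    rw [div_le_div_iff₀ (by positivity) (by norm_num)]
    linarith
  -- definition of f
  set f : X → ℝ := fun π => 1/2 + max 0 (εγ - dist π π₀) with hf
  have hmax_le : ∀ π, max 0 (εγ - dist π π₀) ≤ εγ :=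
    fun π => max_le hε0.le (by linarith [dist_nonneg (x := π) (y := π₀)])
  have hmax_ge : ∀ π, 0 ≤ max 0 (εγ - dist π π₀) := fun π => le_max_left _ _
  have hlip : LipschitzWith 1 f := by
    refine LipschitzWith.of_dist_le_mul fun x y => ?_
    simp only [NNReal.coe_one, one_mul, Real.dist_eq, hf]
    simp only [add_sub_add_left_eq_sub]
    calc |max 0 (εγ - dist x π₀) - max 0 (εγ - dist y π₀)|
        = |max (εγ - dist x π₀) 0 - max (εγ - dist y π₀) 0| := by rw [max_comm, max_comm (εγ - dist y π₀)]
      _ ≤ |(εγ - dist x π₀) - (εγ - dist y π₀)| := abs_max_sub_max_le_abs _ _ _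
      _ = |dist y π₀ - dist x π₀| := by ring_nf
      _ ≤ dist y x := abs_dist_sub_le _ _ _
      _ = dist x y := dist_comm _ _
  have hrange : ∀ π, f π ∈ Set.Icc (0:ℝ) 1 := by
    intro π
    constructor
    · have := hmax_ge π; simp only [hf]; linarith
    · have := hmax_le π; simp only [hf]; linarith
  have hub : ∀ π, f π ≤ 1/2 + εγ := fun π => by simp only [hf]; linarith [hmax_le π]
  have hfπ₀ : f π₀ = 1/2 + εγ := by
    simp only [hf, dist_self, sub_zero, max_eq_right hε0.le]
  have hbdd : BddAbove (Set.range f) := ⟨1/2 + εγ, by rintro _ ⟨π, rfl⟩; exact hub π⟩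
  have hsup : (⨆ π', f π') = 1/2 + εγ :=
    le_antisymm (ciSup_le hub) (hfπ₀ ▸ le_ciSup hbdd π₀)
  refine ⟨f, hlip, hrange, ?_, ?_⟩
  · intro π
    rw [hsup]
    constructor
    · linarith [hub π]
    · simp only [hf]; linarith [hmax_ge π]
  -- the integral bound
  have hf_half : ∀ π, f π = 1/2 + max 0 (εγ - dist π π₀) := fun π => rfl
  -- sqHellinger bound pointwise
  have hH : ∀ π, sqHellinger (bern (f π)) (bern (1/2)) ≤ 4 * εγ^2 := by
    intro π
    have ht0 := hmax_ge π
    have ht1 := hmax_le π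
    calc sqHellinger (bern (f π)) (bern (1/2))
        ≤ 4 * (max 0 (εγ - dist π π₀))^2 :=
          sqHellinger_bern_le _ ht0 (by linarith)
      _ ≤ 4 * εγ^2 := by nlinarith
  have hH0 : ∀ π, 0 ≤ sqHellinger (bern (f π)) (bern (1/2)) := by
    intro π
    rw [sqHellinger_bern _ (hrange π).1 (hrange π).2]
    positivity
  have hHout : ∀ π, π ∉ Metric.ball π₀ εγ → sqHellinger (bern (f π)) (bern (1/2)) = 0 := by
    intro π hπ
    rw [Metric.mem_ball, not_lt] at hπ
    have hfπ : f π = 1/2 := by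
      simp only [hf, max_eq_left (by linarith : εγ - dist π π₀ ≤ 0)]
      ring
    rw [hfπ, sqHellinger_bern _ (by norm_num) (by norm_num)]
    norm_num
  -- G : explicit continuous version of the integrand
  set G : X → ℝ := fun π => (1/2 + εγ - f π)
      - γ * ((Real.sqrt (f π) - Real.sqrt (1/2))^2 + (Real.sqrt (1 - f π) - Real.sqrt (1/2))^2)
    with hG
  have hGeq : ∀ π, G π = (1/2 + εγ) - f π - γ * sqHellinger (bern (f π)) (bern (1/2)) := by
    intro π
    rw [hG, sqHellinger_bern _ (hrange π).1 (hrange π).2]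
    try ring
  have hGcont : Continuous G := by
    have hfc : Continuous f := hlip.continuous
    fun_prop
  have hGbdd : ∀ π, ‖G π‖ ≤ 1 + εγ + 2*γ := by
    intro π
    rw [hGeq π, Real.norm_eq_abs]
    have h2 : sqHellinger (bern (f π)) (bern (1/2)) ≤ 2 := by
      have := hH π
      nlinarith [hε36, hε0]
    exact abs_bound_aux εγ γ _ _ hγ (hH0 π) h2 (hrange π).2 (hrange π).1 hε0
  have hGint : Integrable G p :=
    (integrable_const (1 + εγ + 2*γ)).mono' hGcont.aestronglyMeasurable (ae_of_all _ hGbdd)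
  -- lower bound function
  set B : Set X := Metric.ball π₀ εγ with hB
  have hBmeas : MeasurableSet B := Metric.isOpen_ball.measurableSet
  set c : ℝ := -(4*γ*εγ^2) - εγ with hc
  set h : X → ℝ := fun π => εγ + B.indicator (fun _ => c) π with hh
  have hhle : ∀ π, h π ≤ G π := by
    intro π
    rw [hGeq π]
    by_cases hπ : π ∈ B
    · simp only [hh, Set.indicator_of_mem hπ, hc]
      have h1 := hH π
      have h2 := hub π
      nlinarith
    · simp only [hh, Set.indicator_of_notMem hπ]
      rw [hHout π hπ]
      have hfπ : f π = 1/2 := by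
        rw [Metric.mem_ball, not_lt] at hπ
        simp only [hf, max_eq_left (by linarith : εγ - dist π π₀ ≤ 0)]
        ring
      rw [hfπ]
      ring_nf
      linarith
  have hhint : Integrable h p :=
    (integrable_const εγ).add ((integrable_const c).indicator hBmeas)
  have hmono : ∫ π, h π ∂p ≤ ∫ π, G π ∂p := integral_mono hhint hGint hhle
  have hhval : ∫ π, h π ∂p = εγ + (p B).toReal * c := by
    rw [hh]
    rw [integral_add (integrable_const εγ) ((integrable_const c).indicator hBmeas)]
    rw [integral_const, integral_indicator_const c hBmeas]
    simp [measure_univ]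
    exact Or.inl rfl
  -- final arithmetic
  have hpB : (p B).toReal ≤ δ := hπ₀
  have hpB0 : 0 ≤ (p B).toReal := ENNReal.toReal_nonneg
  have hc0 : c ≤ 0 := by rw [hc]; nlinarith
  have hstep : εγ + δ * c ≤ ∫ π, h π ∂p := by
    rw [hhval]
    have := mul_le_mul_of_nonpos_right hpB hc0
    linarith
  have h4 : 4*γ*εγ^2*δ ≤ εγ/162 := by nlinarith [hkey, hε0]
  have hδε : δ * εγ ≤ εγ/18 := by nlinarith [hδ18, hε0]
  have htarget : (2:ℝ) ^ (-(7:ℤ)) * u ≤ εγ + δ * c := by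
    have h36 : (2:ℝ) ^ (-(7:ℤ)) = 1/128 := by norm_num
    have hu36 : u = 36 * εγ := by rw [hεu]; ring
    rw [h36, hu36, hc]
    nlinarith [h4, hδε, hε0]
  calc (2:ℝ) ^ (-(7:ℤ)) * γ ^ (-1/(d+1)) = (2:ℝ) ^ (-(7:ℤ)) * u := by rw [hu]
    _ ≤ εγ + δ * c := htarget
    _ ≤ ∫ π, h π ∂p := hstep
    _ ≤ ∫ π, G π ∂p := hmono
    _ = ∫ π, ((⨆ π', f π') - f π - γ * sqHellinger (bern (f π)) (bern (1/2))) ∂p := by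
        refine integral_congr_ae (ae_of_all _ fun π => ?_)
        rw [hGeq π, hsup]
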